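/- If T is a random tree with law π satisfying the Markov hypotheses with tree-shift f, then π({λ}) = μ_π(λ) · Π_{h ∈ f⁻¹(λ)} (1 − μ_π(h)/μ_π(λ)). -/

import Mathlib

open Finset
open scoped Classical

/-- The probability, under the law `π` on the finite collection `TT` of trees,
of the event `E`. -/
noncomputable def prOf {A : Type*} [DecidableEq A]
    (TT : Finset (Finset (List A))) (π : Finset (List A) → ℝ)
    (E : Finset (List A) → Prop) : ℝ :=
  ∑ t ∈ TT, if E t then π t else 0

/-- The mean occupation `μ_π(v) = P(T(v) = 1)` of node `v`. -/
noncomputable def muOf {A : Type*} [DecidableEq A]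
    (TT : Finset (Finset (List A))) (π : Finset (List A) → ℝ) (v : List A) : ℝ :=
  prOf TT π (fun t => v ∈ t)

/-- `f` is a tree-shift on `V`: for each nonempty node `w ∈ V`, `f w` is the father or
a brother of `w`, and some iterate of `f` sends `w` to the root `λ = []`. -/
def IsTreeShift {A : Type*} (V : Finset (List A)) (f : List A → List A) : Prop :=
  (∀ (a : A) (u : List A), (a :: u) ∈ V →
      f (a :: u) = u ∨ ∃ b : A, b ≠ a ∧ f (a :: u) = b :: u) ∧
  (∀ v ∈ V, v ≠ [] → ∃ k : ℕ, f^[k] v = [])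

/-- The Markov hypotheses for a random tree with law `π` (supported on the finite
collection `TT` of trees with node set `V`) with respect to the tree-shift `f`:
(a) `0 < μ_π(w) < μ_π(f w) < 1`; (b) `P(T(w) = 1, T(f w) = 0) = 0`;
(c) the Markov conditional-probability property. -/
def MarkovHyp {A : Type*} [DecidableEq A] (V : Finset (List A))
    (TT : Finset (Finset (List A))) (π : Finset (List A) → ℝ)
    (f : List A → List A) : Prop :=
  (∀ w ∈ V, w ≠ [] →
      0 < muOf TT π w ∧ muOf TT π w < muOf TT π (f w) ∧ muOf TT π (f w) < 1) ∧
  (∀ w ∈ V, w ≠ [] → prOf TT π (fun t => w ∈ t ∧ f w ∉ t) = 0) ∧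
  (∀ w ∈ V, w ≠ [] → ∀ I J : Finset (List A), I ⊆ V → J ⊆ V →
      f w ∈ I → w ∉ I ∪ J →
      0 < prOf TT π (fun t => I ⊆ t ∧ ∀ u ∈ J, u ∉ t) →
      prOf TT π (fun t => w ∈ t ∧ I ⊆ t ∧ ∀ u ∈ J, u ∉ t) /
          prOf TT π (fun t => I ⊆ t ∧ ∀ u ∈ J, u ∉ t) =
        prOf TT π (fun t => w ∈ t ∧ f w ∈ t) / prOf TT π (fun t => f w ∈ t))


section Helpers

variable {A : Type*} [DecidableEq A]
variable (TT : Finset (Finset (List A))) (π : Finset (List A) → ℝ)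

lemma prOf_congr' {E F : Finset (List A) → Prop} (h : ∀ t ∈ TT, (E t ↔ F t)) :
    prOf TT π E = prOf TT π F :=
  Finset.sum_congr rfl fun t ht => by
    by_cases he : E t
    · rw [if_pos he, if_pos ((h t ht).mp he)]
    · rw [if_neg he, if_neg (fun hf => he ((h t ht).mpr hf))]

lemma prOf_split (E P : Finset (List A) → Prop) :
    prOf TT π E = prOf TT π (fun t => E t ∧ P t) + prOf TT π (fun t => E t ∧ ¬ P t) := by
  unfold prOf
  rw [← Finset.sum_add_distrib]
  refine Finset.sum_congr rfl fun t _ => ?_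
  by_cases hE : E t <;> by_cases hP : P t <;> simp [hE, hP]

lemma prOf_nonneg (hπ0 : ∀ t, 0 ≤ π t) (E : Finset (List A) → Prop) :
    0 ≤ prOf TT π E := by
  refine Finset.sum_nonneg fun t _ => ?_
  split
  · exact hπ0 t
  · exact le_refl 0

lemma prOf_null (hπ0 : ∀ t, 0 ≤ π t) {E : Finset (List A) → Prop}
    (h : prOf TT π E = 0) : ∀ t ∈ TT, E t → π t = 0 := by
  intro t ht hEt
  have hnn : ∀ s ∈ TT, 0 ≤ if E s then π s else 0 := fun s _ => by
    split
    · exact hπ0 s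
    · exact le_refl 0
  have := (Finset.sum_eq_zero_iff_of_nonneg hnn).mp h t ht
  rwa [if_pos hEt] at this

end Helpers

/-- formula (A.13): if the random tree `T` with law `π` satisfies the
Markov hypotheses with tree-shift `f`, then
`π({λ}) = μ_π(λ) ∏_{h ∈ f⁻¹(λ)} (1 - μ_π(h)/μ_π(λ))`. -/
theorem stmt_15
    {A : Type*} [Fintype A] [DecidableEq A] [Nonempty A]
    (L : ℕ) (hL : 0 < L)
    (V : Finset (List A)) (hV : ∀ l : List A, l ∈ V ↔ l.length ≤ L)
    (TT : Finset (Finset (List A)))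
    (hTT : ∀ t, t ∈ TT ↔ t ⊆ V ∧ ∀ (a : A) (w : List A), a :: w ∈ t → w ∈ t)
    (π : Finset (List A) → ℝ)
    (hπ0 : ∀ t, 0 ≤ π t) (hπ1 : ∑ t ∈ TT, π t = 1)
    (f : List A → List A) (hf : IsTreeShift V f)
    (hM : MarkovHyp V TT π f) :
    π {([] : List A)} =
      muOf TT π [] *
        ∏ h ∈ V.filter (fun h => h ≠ [] ∧ f h = []),
          (1 - muOf TT π h / muOf TT π []) := by
  classical
  set H : Finset (List A) := V.filter (fun h => h ≠ [] ∧ f h = []) with hHdef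
  have hVmem1 : ∀ a : A, [a] ∈ V := fun a => (hV [a]).mpr (by simp; omega)
  have hrootV : ([] : List A) ∈ V := (hV []).mpr (by simp)
  -- chains of iterates starting from a depth-1 node
  have key : ∀ a : A, ∃ k : ℕ, 0 < k ∧ f^[k] [a] = [] ∧
      ∀ j < k, ∃ b : A, f^[j] [a] = [b] := by
    intro a
    have hex := hf.2 [a] (hVmem1 a) (by simp)
    refine ⟨Nat.find hex, ?_, Nat.find_spec hex, ?_⟩
    · rcases Nat.eq_zero_or_pos (Nat.find hex) with h0 | h
      · have := Nat.find_spec hex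
        rw [h0] at this
        simp at this
      · exact h
    · intro j
      induction j with
      | zero => exact fun _ => ⟨a, rfl⟩
      | succ j ih =>
        intro hj
        obtain ⟨b, hb⟩ := ih (by omega)
        rcases hf.1 b [] (hVmem1 b) with h0 | ⟨c, _, hc⟩
        · exact absurd (show f^[j+1] [a] = [] by
            rw [Function.iterate_succ_apply', hb, h0]) (Nat.find_min hex hj)
        · exact ⟨c, by rw [Function.iterate_succ_apply', hb, hc]⟩
  -- H is nonempty
  have hHne : ∃ h0, h0 ∈ H := by
    obtain ⟨a0⟩ := (inferInstance : Nonempty A)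
    obtain ⟨k, hk0, hkspec, hsingle⟩ := key a0
    obtain ⟨b, hb⟩ := hsingle (k-1) (by omega)
    refine ⟨[b], Finset.mem_filter.mpr ⟨hVmem1 b, by simp, ?_⟩⟩
    have h1 : f^[k] [a0] = f (f^[k-1] [a0]) := by
      conv_lhs => rw [show k = (k-1)+1 by omega, Function.iterate_succ_apply']
    rw [h1, hb] at hkspec
    exact hkspec
  obtain ⟨h0, hh0⟩ := hHne
  have hμpos : 0 < muOf TT π [] := by
    obtain ⟨hV0, hne0, hf0⟩ := Finset.mem_filter.mp hh0
    have := hM.1 h0 hV0 hne0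
    rw [hf0] at this
    exact lt_trans this.1 this.2.1
  -- trees in the event which are not {[]} are null
  have hnullt : ∀ t ∈ TT, [] ∈ t → (∀ h ∈ H, h ∉ t) → t ≠ {([] : List A)} → π t = 0 := by
    intro t ht hroot hHnot hne
    have hsub : {([] : List A)} ⊆ t := Finset.singleton_subset_iff.mpr hroot
    obtain ⟨v, hv, hvne⟩ := Finset.exists_of_ssubset (lt_of_le_of_ne hsub (Ne.symm hne))
    have hvne' : v ≠ [] := by simpa using hvne
    have hclosed := ((hTT t).mp ht).2
    have hdepth : ∀ v : List A, v ∈ t → v ≠ [] → ∃ a : A, [a] ∈ t := by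
      intro v
      induction v with
      | nil => exact fun _ h => absurd rfl h
      | cons a u ih =>
        intro hv _
        rcases eq_or_ne u [] with hu | hu
        · exact ⟨a, hu ▸ hv⟩
        · exact ih (hclosed a u hv) hu
    obtain ⟨a, hat⟩ := hdepth v hv hvne'
    obtain ⟨k, hk0, hkspec, hsingle⟩ := key a
    have hjump : ∃ j < k, f^[j] [a] ∈ t ∧ f^[j+1] [a] ∉ t := by
      by_contra hcon
      push_neg at hcon
      have hall : ∀ j < k, f^[j] [a] ∈ t := by
        intro j
        induction j with
        | zero => exact fun _ => hat
        | succ j ih => exact fun hj => hcon j (by omega) (ih (by omega))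
      obtain ⟨b, hb⟩ := hsingle (k-1) (by omega)
      have hbH : [b] ∈ H := by
        refine Finset.mem_filter.mpr ⟨hVmem1 b, by simp, ?_⟩
        have h1 : f^[k] [a] = f (f^[k-1] [a]) := by
          conv_lhs => rw [show k = (k-1)+1 by omega, Function.iterate_succ_apply']
        rw [h1, hb] at hkspec
        exact hkspec
      exact hHnot [b] hbH (hb ▸ hall (k-1) (by omega))
    obtain ⟨j, hjk, hjin, hjout⟩ := hjump
    obtain ⟨b, hb⟩ := hsingle j hjk
    have hz := hM.2.1 [b] (hVmem1 b) (by simp)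
    refine prOf_null TT π hπ0 hz t ht ⟨hb ▸ hjin, ?_⟩
    show f [b] ∉ t
    have hj1 : f^[j+1] [a] = f [b] := by rw [Function.iterate_succ_apply', hb]
    rw [← hj1]
    exact hjout
  -- π {[]} as a probability
  have hrootTT : ({([] : List A)} : Finset (List A)) ∈ TT := by
    rw [hTT]
    refine ⟨Finset.singleton_subset_iff.mpr hrootV, ?_⟩
    intro a w hw
    simp at hw
  have hpilam : π {([] : List A)} = prOf TT π (fun t => t = {([] : List A)}) := by
    unfold prOf
    beta_reduce
    rw [Finset.sum_eq_single ({([] : List A)} : Finset (List A)) ?hz ?hn]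
    case hz => intro t _ hne; rw [if_neg hne]
    case hn => intro hnot; exact absurd hrootTT hnot
    rw [if_pos rfl]
  -- reduction of the event {T = {[]}} modulo null sets
  have hred : prOf TT π (fun t => t = {([] : List A)})
      = prOf TT π (fun t => [] ∈ t ∧ ∀ u ∈ H, u ∉ t) := by
    have hsplit : prOf TT π (fun t => ([] : List A) ∈ t ∧ ∀ u ∈ H, u ∉ t)
        = prOf TT π (fun t => (([] : List A) ∈ t ∧ ∀ u ∈ H, u ∉ t) ∧ t = {([] : List A)})
        + prOf TT π (fun t => (([] : List A) ∈ t ∧ ∀ u ∈ H, u ∉ t) ∧ ¬ t = {([] : List A)}) :=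
      prOf_split TT π _ _
    have h1 : prOf TT π (fun t => ([] ∈ t ∧ ∀ u ∈ H, u ∉ t) ∧ t = {([] : List A)})
        = prOf TT π (fun t => t = {([] : List A)}) := by
      refine prOf_congr' TT π fun t ht => ?_
      constructor
      · exact fun h => h.2
      · rintro rfl
        exact ⟨⟨Finset.mem_singleton_self _, fun h hh hmem =>
          (Finset.mem_filter.mp hh).2.1 (Finset.mem_singleton.mp hmem)⟩, rfl⟩
    have h2 : prOf TT π (fun t => (([] : List A) ∈ t ∧ ∀ u ∈ H, u ∉ t)
        ∧ ¬ t = {([] : List A)}) = 0 := by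
      unfold prOf
      refine Finset.sum_eq_zero fun t ht => ?_
      by_cases hE : (([] : List A) ∈ t ∧ ∀ u ∈ H, u ∉ t) ∧ ¬ t = {([] : List A)}
      · rw [if_pos hE]
        exact hnullt t ht hE.1.1 hE.1.2 hE.2
      · rw [if_neg hE]
    rw [hsplit, h1, h2, add_zero]
  -- the main induction over subsets of H
  have hmain : ∀ J : Finset (List A), J ⊆ H →
      prOf TT π (fun t => ([] : List A) ∈ t ∧ ∀ u ∈ J, u ∉ t)
        = muOf TT π [] * ∏ h ∈ J, (1 - muOf TT π h / muOf TT π []) ∧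
      0 < prOf TT π (fun t => ([] : List A) ∈ t ∧ ∀ u ∈ J, u ∉ t) := by
    intro J
    induction J using Finset.induction_on with
    | empty =>
      intro _
      have he : prOf TT π (fun t => ([] : List A) ∈ t ∧ ∀ u ∈ (∅ : Finset (List A)), u ∉ t)
          = prOf TT π (fun t => ([] : List A) ∈ t) :=
        prOf_congr' TT π fun t _ => by simp
      constructor
      · rw [he, Finset.prod_empty, mul_one]
        rfl
      · rw [he]
        exact hμpos
    | @insert h J hhJ ih =>
      intro hsub
      have hhH : h ∈ H := hsub (Finset.mem_insert_self h J)
      have hJH : J ⊆ H := fun x hx => hsub (Finset.mem_insert_of_mem hx)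
      obtain ⟨hIH, hIHpos⟩ := ih hJH
      obtain ⟨hhV, hhne, hfh⟩ := Finset.mem_filter.mp hhH
      have hμh := hM.1 h hhV hhne
      have hμhlt : muOf TT π h < muOf TT π [] := by
        rw [← hfh]
        exact hμh.2.1
      have hfac : 0 < 1 - muOf TT π h / muOf TT π [] := by
        have : muOf TT π h / muOf TT π [] < 1 := (div_lt_one hμpos).mpr hμhlt
        linarith
      have hIsub : ({([] : List A)} : Finset (List A)) ⊆ V :=
        Finset.singleton_subset_iff.mpr hrootV
      have hJV : J ⊆ V := hJH.trans (Finset.filter_subset _ _)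
      have hfhI : f h ∈ ({([] : List A)} : Finset (List A)) := by
        rw [hfh]
        exact Finset.mem_singleton_self _
      have hhnot : h ∉ ({([] : List A)} : Finset (List A)) ∪ J := by
        rw [Finset.mem_union]
        rintro (h1 | h2)
        · exact hhne (Finset.mem_singleton.mp h1)
        · exact hhJ h2
      have hev : prOf TT π (fun t => ({([] : List A)} : Finset (List A)) ⊆ t ∧ ∀ u ∈ J, u ∉ t)
          = prOf TT π (fun t => ([] : List A) ∈ t ∧ ∀ u ∈ J, u ∉ t) :=
        prOf_congr' TT π fun t _ => by simp [Finset.singleton_subset_iff]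
      have hpos' : 0 < prOf TT π
          (fun t => ({([] : List A)} : Finset (List A)) ⊆ t ∧ ∀ u ∈ J, u ∉ t) := by
        rw [hev]
        exact hIHpos
      have hc := hM.2.2 h hhV hhne {([] : List A)} J hIsub hJV hfhI hhnot hpos'
      have hnum : prOf TT π (fun t => h ∈ t ∧ f h ∈ t) = muOf TT π h := by
        have hsp : muOf TT π h = prOf TT π (fun t => h ∈ t ∧ f h ∈ t)
            + prOf TT π (fun t => h ∈ t ∧ ¬ f h ∈ t) :=
          prOf_split TT π (fun t => h ∈ t) (fun t => f h ∈ t)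
        have hz : prOf TT π (fun t => h ∈ t ∧ f h ∉ t) = 0 := hM.2.1 h hhV hhne
        rw [hz, add_zero] at hsp
        exact hsp.symm
      have hden : prOf TT π (fun t => f h ∈ t) = muOf TT π [] := by
        rw [hfh]
        rfl
      have hXev : prOf TT π (fun t => h ∈ t ∧ ({([] : List A)} : Finset (List A)) ⊆ t
            ∧ ∀ u ∈ J, u ∉ t)
          = prOf TT π (fun t => (([] : List A) ∈ t ∧ ∀ u ∈ J, u ∉ t) ∧ h ∈ t) :=
        prOf_congr' TT π fun t _ => by
          simp only [Finset.singleton_subset_iff]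
          tauto
      rw [hev, hnum, hden, hXev] at hc
      have hXval := (div_eq_iff (ne_of_gt hIHpos)).mp hc
      have hsp2 : prOf TT π (fun t => ([] : List A) ∈ t ∧ ∀ u ∈ J, u ∉ t)
          = prOf TT π (fun t => (([] : List A) ∈ t ∧ ∀ u ∈ J, u ∉ t) ∧ h ∈ t)
          + prOf TT π (fun t => (([] : List A) ∈ t ∧ ∀ u ∈ J, u ∉ t) ∧ ¬ h ∈ t) :=
        prOf_split TT π (fun t => ([] : List A) ∈ t ∧ ∀ u ∈ J, u ∉ t) (fun t => h ∈ t)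
      have hins : prOf TT π (fun t => (([] : List A) ∈ t ∧ ∀ u ∈ J, u ∉ t) ∧ ¬ h ∈ t)
          = prOf TT π (fun t => ([] : List A) ∈ t ∧ ∀ u ∈ insert h J, u ∉ t) :=
        prOf_congr' TT π fun t _ => by
          simp only [Finset.forall_mem_insert]
          tauto
      rw [hins] at hsp2
      have hval : prOf TT π (fun t => ([] : List A) ∈ t ∧ ∀ u ∈ insert h J, u ∉ t)
          = prOf TT π (fun t => ([] : List A) ∈ t ∧ ∀ u ∈ J, u ∉ t)
            * (1 - muOf TT π h / muOf TT π []) := by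
        linear_combination -hsp2 - hXval
      constructor
      · rw [hval, hIH, Finset.prod_insert hhJ]
        ring
      · rw [hval]
        exact mul_pos hIHpos hfac
  obtain ⟨hval, _⟩ := hmain H (le_refl H)
  rw [hpilam, hred, hval]
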